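/- Rank-one increment formula for the MSE: assume W = V_K^H H^H H V_K. Then for every subset S ⊆ {1,…,n} and every u ∈ {1,…,n} with u ∉ S, MSE(S ∪ {u}) − MSE(S) = − ( v_u^H M(S)^{-1} W M(S)^{-1} v_u ) / ( λ_{w,u} + v_u^H M(S)^{-1} v_u ), where both the numerator and the quantity v_u^H M(S)^{-1} v_u are nonnegative real numbers. -/

import Mathlib

open Matrix Finset ComplexOrder

/-- The matrix `M(S) = Λ⁻¹ + ∑_{i ∈ S} λ_{w,i}⁻¹ v_i v_iᴴ`. -/
noncomputable def Mmat {n k : ℕ} (lam : Fin k → ℝ) (lw : Fin n → ℝ)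
    (v : Fin n → Fin k → ℂ) (S : Finset (Fin n)) : Matrix (Fin k) (Fin k) ℂ :=
  (Matrix.diagonal fun j => (lam j : ℂ))⁻¹ +
    ∑ i ∈ S, ((lw i : ℂ))⁻¹ • Matrix.vecMulVec (v i) (star (v i))

/-- The matrix `V_K` whose `i`-th row is `v_iᴴ`. -/
noncomputable def VKmat {n k : ℕ} (v : Fin n → Fin k → ℂ) : Matrix (Fin n) (Fin k) ℂ :=
  Matrix.of fun i j => star (v i j)

/-- The optimal interpolation error covariance `K*(S) = H V_K M(S)⁻¹ V_Kᴴ Hᴴ`. -/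
noncomputable def Kstar {n k m : ℕ} (lam : Fin k → ℝ) (lw : Fin n → ℝ)
    (v : Fin n → Fin k → ℂ) (H : Matrix (Fin m) (Fin n) ℂ) (S : Finset (Fin n)) :
    Matrix (Fin m) (Fin m) ℂ :=
  H * VKmat v * (Mmat lam lw v S)⁻¹ * (VKmat v)ᴴ * Hᴴ

/-- The interpolation mean-square error `MSE(S) = trace K*(S)`, a (nonnegative) real. -/
noncomputable def MSE {n k m : ℕ} (lam : Fin k → ℝ) (lw : Fin n → ℝ)
    (v : Fin n → Fin k → ℂ) (H : Matrix (Fin m) (Fin n) ℂ) (S : Finset (Fin n)) : ℝ :=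
  ((Kstar lam lw v H S).trace).re

/- ### Auxiliary lemmas -/

lemma aux_mul_vecMulVec {p q r : Type*} [Fintype q] (M : Matrix p q ℂ) (a : q → ℂ) (b : r → ℂ) :
    M * Matrix.vecMulVec a b = Matrix.vecMulVec (M *ᵥ a) b := by
  ext i j
  simp only [Matrix.mul_apply, Matrix.vecMulVec_apply, Matrix.mulVec, dotProduct,
    Finset.sum_mul]
  exact Finset.sum_congr rfl fun l _ => by ring

lemma aux_vecMulVec_mul {p q r : Type*} [Fintype q] (a : p → ℂ) (b : q → ℂ)
    (M : Matrix q r ℂ) :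
    Matrix.vecMulVec a b * M = Matrix.vecMulVec a (b ᵥ* M) := by
  ext i j
  simp only [Matrix.mul_apply, Matrix.vecMulVec_apply, Matrix.vecMul, dotProduct,
    Finset.mul_sum]
  exact Finset.sum_congr rfl fun l _ => by ring

lemma aux_vecMulVec_mul_vecMulVec {p q r : Type*} [Fintype q] (a : p → ℂ) (b c : q → ℂ)
    (d : r → ℂ) :
    Matrix.vecMulVec a b * Matrix.vecMulVec c d = (b ⬝ᵥ c) • Matrix.vecMulVec a d := by
  ext i j
  simp only [Matrix.mul_apply, Matrix.vecMulVec_apply, Matrix.smul_apply, dotProduct,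
    Finset.sum_mul, smul_eq_mul]
  exact Finset.sum_congr rfl fun l _ => by ring

lemma aux_trace_vecMulVec {p : Type*} [Fintype p] (a b : p → ℂ) :
    (Matrix.vecMulVec a b).trace = a ⬝ᵥ b := by
  simp [Matrix.trace, Matrix.diag, Matrix.vecMulVec_apply, dotProduct]

lemma aux_vecMulVec_mulVec {p q : Type*} [Fintype q] (a : p → ℂ) (b x : q → ℂ) :
    Matrix.vecMulVec a b *ᵥ x = (b ⬝ᵥ x) • a := by
  ext j
  simp only [Matrix.mulVec, Matrix.vecMulVec_apply, dotProduct, Pi.smul_apply,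
    smul_eq_mul, Finset.sum_mul]
  exact Finset.sum_congr rfl fun l _ => by ring

lemma aux_term_posSemidef {k : ℕ} (c : ℝ) (hc : 0 ≤ c) (w : Fin k → ℂ) :
    (((c : ℂ)) • Matrix.vecMulVec w (star w)).PosSemidef := by
  refine Matrix.PosSemidef.of_dotProduct_mulVec_nonneg ?_ ?_
  · show _ᴴ = _
    ext i j
    simp only [Matrix.conjTranspose_apply, Matrix.smul_apply, Matrix.vecMulVec_apply,
      Pi.star_apply, smul_eq_mul, star_mul', Complex.star_def, Complex.conj_conj,
      Complex.conj_ofReal]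
    ring
  · intro x
    have h1 : Matrix.vecMulVec w (star w) *ᵥ x = (star w ⬝ᵥ x) • w :=
      aux_vecMulVec_mulVec w (star w) x
    rw [Matrix.smul_mulVec, dotProduct_smul, h1, dotProduct_smul]
    have h2 : star x ⬝ᵥ w = star (star w ⬝ᵥ x) := by
      simp [dotProduct, Finset.sum_congr, mul_comm]
    rw [h2]
    set z := star w ⬝ᵥ x with hz
    have : z * star z = (Complex.normSq z : ℂ) := Complex.mul_conj z
    rw [smul_eq_mul, smul_eq_mul, this, ← Complex.ofReal_mul]
    rw [Complex.nonneg_iff]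
    constructor
    · simp only [Complex.ofReal_re]
      exact mul_nonneg hc (Complex.normSq_nonneg z)
    · simp

lemma aux_Mmat_posDef {n k : ℕ} (lam : Fin k → ℝ) (hlam : ∀ j, 0 < lam j)
    (lw : Fin n → ℝ) (hlw : ∀ i, 0 < lw i) (v : Fin n → Fin k → ℂ) (S : Finset (Fin n)) :
    (Mmat lam lw v S).PosDef := by
  apply Matrix.PosDef.add_posSemidef
  · refine Matrix.posDef_inv_iff.mpr (Matrix.PosDef.diagonal fun j => ?_)
    rw [Complex.zero_lt_real]
    exact hlam j
  · refine Finset.sum_induction _ _ (fun a b ha hb => ha.add hb) Matrix.PosSemidef.zero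
      fun i _ => ?_
    have := aux_term_posSemidef (lw i)⁻¹ (inv_nonneg.mpr (hlw i).le) (v i)
    rwa [Complex.ofReal_inv] at this

/-- Rank-one increment formula for the MSE: with `W = V_Kᴴ Hᴴ H V_K`,
for every `S` and every `u ∉ S`,
`MSE(S ∪ {u}) - MSE(S) = -(v_uᴴ M(S)⁻¹ W M(S)⁻¹ v_u) / (λ_{w,u} + v_uᴴ M(S)⁻¹ v_u)`,
where both the numerator and `v_uᴴ M(S)⁻¹ v_u` are nonnegative real numbers. -/
theorem MSE_rank_one_increment
    (n k m : ℕ)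
    (v : Fin n → Fin k → ℂ)
    (H : Matrix (Fin m) (Fin n) ℂ)
    (lam : Fin k → ℝ) (hlam : ∀ j, 0 < lam j)
    (lw : Fin n → ℝ) (hlw : ∀ i, 0 < lw i)
    (W : Matrix (Fin k) (Fin k) ℂ)
    (hWdef : W = (VKmat v)ᴴ * Hᴴ * H * VKmat v)
    (S : Finset (Fin n)) (u : Fin n) (hu : u ∉ S)
    (Nval qval : ℂ)
    (hN : Nval = star (v u) ⬝ᵥ
      (((Mmat lam lw v S)⁻¹ * W * (Mmat lam lw v S)⁻¹) *ᵥ v u))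
    (hq : qval = star (v u) ⬝ᵥ ((Mmat lam lw v S)⁻¹ *ᵥ v u)) :
    Nval.im = 0 ∧ 0 ≤ Nval.re ∧ qval.im = 0 ∧ 0 ≤ qval.re ∧
      MSE lam lw v H (insert u S) - MSE lam lw v H S =
        -(Nval.re / (lw u + qval.re)) := by
  have hApd : (Mmat lam lw v S).PosDef := aux_Mmat_posDef lam hlam lw hlw v S
  set A := Mmat lam lw v S with hAdef
  set Ai := A⁻¹ with hAidef
  have hAipd : Ai.PosDef := hApd.inv
  set B := H * VKmat v with hBdef
  set w := v u with hwdef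
  set V := Matrix.vecMulVec w (star w) with hVdef
  -- q is nonneg real
  have hq0 : 0 ≤ qval := hq ▸ hAipd.posSemidef.dotProduct_mulVec_nonneg w
  obtain ⟨hqre, hqim⟩ := Complex.nonneg_iff.mp hq0
  -- N is nonneg real
  have hAiH : Aiᴴ = Ai := hAipd.isHermitian
  have hNmat : Ai * W * Ai = (B * Ai)ᴴ * (B * Ai) := by
    rw [hWdef, Matrix.conjTranspose_mul, hAiH, hBdef, Matrix.conjTranspose_mul]
    simp only [Matrix.mul_assoc]
  have hN0 : 0 ≤ Nval := by
    rw [hN, hNmat]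
    exact (Matrix.posSemidef_conjTranspose_mul_self (B * Ai)).dotProduct_mulVec_nonneg w
  obtain ⟨hNre, hNim⟩ := Complex.nonneg_iff.mp hN0
  -- scalars
  set q : ℂ := qval with hqdef
  set s : ℂ := (lw u : ℂ) + q with hsdef
  have hlwu : ((lw u : ℂ)) ≠ 0 := by
    simpa using (hlw u).ne'
  have hsre : s.re = lw u + qval.re := by simp [hsdef, hqdef]
  have hsim : s.im = 0 := by
    simp only [hsdef, Complex.add_im, Complex.ofReal_im, zero_add]
    exact hqim.symm
  have hsrepos : 0 < s.re := by rw [hsre]; have := hlw u; linarith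
  have hs : s ≠ 0 := fun h => by rw [h] at hsrepos; simp at hsrepos
  -- the rank-one update of the inverse
  set c : ℂ := ((lw u : ℂ))⁻¹ with hcdef
  set X := Ai - s⁻¹ • (Ai * V * Ai) with hXdef
  have hMins : Mmat lam lw v (insert u S) = A + c • V := by
    rw [hAdef]
    simp only [Mmat, Finset.sum_insert hu, hVdef, hcdef, hwdef]
    abel
  have hAAi : A * Ai = 1 := Matrix.mul_nonsing_inv A ((Matrix.isUnit_iff_isUnit_det A).mp hApd.isUnit)
  have hqeq : star w ⬝ᵥ (Ai *ᵥ w) = q := hq.symm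
  have hVAiV : V * Ai * V = q • V := by
    rw [hVdef, aux_vecMulVec_mul, aux_vecMulVec_mul_vecMulVec,
      ← Matrix.dotProduct_mulVec, hqeq]
  have e1 : A * (Ai * V * Ai) = V * Ai := by
    rw [show Ai * V * Ai = Ai * (V * Ai) from by rw [Matrix.mul_assoc],
      ← Matrix.mul_assoc, hAAi, one_mul]
  have e2 : V * (Ai * V * Ai) = q • (V * Ai) := by
    calc V * (Ai * V * Ai) = (V * Ai * V) * Ai := by simp only [Matrix.mul_assoc]
    _ = q • (V * Ai) := by rw [hVAiV, Matrix.smul_mul]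
  have hcoef : c - s⁻¹ - c * s⁻¹ * q = 0 := by
    rw [hcdef]
    field_simp
    rw [hsdef]
    ring
  have hAX : A * X = 1 - s⁻¹ • (V * Ai) := by
    rw [hXdef, Matrix.mul_sub, hAAi, Matrix.mul_smul, e1]
  have hVX : V * X = V * Ai - (s⁻¹ * q) • (V * Ai) := by
    rw [hXdef, Matrix.mul_sub, Matrix.mul_smul, e2, smul_smul]
  have key : (A + c • V) * X = 1 := by
    rw [Matrix.add_mul, Matrix.smul_mul, hAX, hVX]
    have hlin : (1 : Matrix (Fin k) (Fin k) ℂ) - s⁻¹ • (V * Ai) +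
        c • (V * Ai - (s⁻¹ * q) • (V * Ai)) =
        1 + (c - s⁻¹ - c * s⁻¹ * q) • (V * Ai) := by module
    rw [hlin, hcoef, zero_smul, add_zero]
  have hXinv : (Mmat lam lw v (insert u S))⁻¹ = X := by
    rw [hMins]; exact Matrix.inv_eq_right_inv key
  -- Kstar in terms of B
  have hKstar : ∀ T : Finset (Fin n),
      Kstar lam lw v H T = B * (Mmat lam lw v T)⁻¹ * Bᴴ := by
    intro T
    rw [Kstar, hBdef, Matrix.conjTranspose_mul]
    simp only [Matrix.mul_assoc]
  -- trace computation
  have htr : (B * (Ai * V * Ai) * Bᴴ).trace = Nval := by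
    have : B * (Ai * V * Ai) * Bᴴ =
        Matrix.vecMulVec ((B * Ai) *ᵥ w) (star w ᵥ* (Ai * Bᴴ)) := by
      rw [hVdef, show B * (Ai * Matrix.vecMulVec w (star w) * Ai) * Bᴴ =
        (B * Ai) * Matrix.vecMulVec w (star w) * (Ai * Bᴴ) from by
          simp only [Matrix.mul_assoc], aux_mul_vecMulVec, aux_vecMulVec_mul]
    rw [this, aux_trace_vecMulVec, dotProduct_comm, ← Matrix.dotProduct_mulVec,
      Matrix.mulVec_mulVec, hN]
    rw [show Ai * Bᴴ * (B * Ai) = Ai * W * Ai from by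
      rw [hWdef, hBdef, Matrix.conjTranspose_mul]; simp only [Matrix.mul_assoc]]
  have hdiff : (Kstar lam lw v H (insert u S)).trace - (Kstar lam lw v H S).trace =
      -(s⁻¹ * Nval) := by
    rw [hKstar, hKstar, hXinv, ← hAdef, ← hAidef, hXdef]
    rw [Matrix.mul_sub, Matrix.sub_mul, Matrix.trace_sub, Matrix.mul_smul,
      Matrix.smul_mul, Matrix.trace_smul, htr]
    simp only [smul_eq_mul]
    ring
  -- conclude
  refine ⟨hNim.symm, hNre, hqim.symm, hqre, ?_⟩
  have hMSE : MSE lam lw v H (insert u S) - MSE lam lw v H S =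
      ((Kstar lam lw v H (insert u S)).trace - (Kstar lam lw v H S).trace).re := by
    rw [Complex.sub_re]; rfl
  rw [hMSE, hdiff]
  have hsval : s = ((lw u + qval.re : ℝ) : ℂ) := by
    apply Complex.ext
    · simpa using hsre
    · simpa using hsim
  have hNval : Nval = ((Nval.re : ℝ) : ℂ) := by
    apply Complex.ext <;> simp [← hNim]
  rw [hsval, hNval, ← Complex.ofReal_inv, ← Complex.ofReal_mul]
  simp only [Complex.neg_re, Complex.ofReal_re]
  rw [div_eq_inv_mul]
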